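/- Let f(z,w) = Σ over (m,n) with mn = 0 of a_{m,n} zᵐ wⁿ be a Laurent-type expansion on the conservative hyperbola H_r = {(z,w) ∈ 𝔻² : zw = 1/r²} for r > 1, induced from a Laurent series F(ζ) = Σ_{k∈ℤ} c_k ζᵏ on the annulus {1/r < |ζ| < r} via z = ζ/r, w = 1/(rζ). Writing f(z,w) = f⁺(z)·z + a₀ + w·f⁻(w), the functions f⁺ and f⁻ are holomorphic on 𝔻 and satisfy ‖f⁺(z)z + a₀‖_𝔻 ≤ r²/(r²−1) · ‖f‖_{H_r} and ‖w f⁻(w) + a₀‖_𝔻 ≤ r²/(r²−1) · ‖f‖_{H_r}, where ‖f‖_{H_r} is the supremum of |f| on H_r. -/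

import Mathlib

open Metric Complex MeasureTheory Filter Set Topology

lemma summable_aux (r : ℝ) (hr : 1 < r) (c : ℤ → ℂ) (F : ℂ → ℂ)
    (hsum : ∀ ζ : ℂ, 1 / r < ‖ζ‖ → ‖ζ‖ < r → HasSum (fun k : ℤ => c k * ζ ^ k) (F ζ))
    {s : ℝ} (hs1 : 1 / r < s) (hs2 : s < r) :
    Summable (fun j : ℤ => ‖c j‖ * s ^ j) := by
  have hr0 : (0:ℝ) < 1 / r := by positivity
  have hs0 : 0 < s := hr0.trans hs1
  have key : ∀ ρ : ℝ, 1 / r < ρ → ρ < r → Summable (fun j : ℤ => ‖c j‖ * ρ ^ j) := by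
    intro ρ h1 h2
    have hρ0 : 0 < ρ := hr0.trans h1
    have hnorm : ‖(ρ:ℂ)‖ = ρ := by rw [Complex.norm_real, Real.norm_of_nonneg hρ0.le]
    have := (hsum (ρ:ℂ) (by rw [hnorm]; exact h1) (by rw [hnorm]; exact h2)).summable
    have h2 := summable_norm_iff.mpr this
    convert h2 using 2 with j
    rw [norm_mul, norm_zpow, hnorm]
  set ρ1 := (1/r + s)/2 with hρ1
  set ρ2 := (s + r)/2 with hρ2
  have h11 : 1/r < ρ1 := by rw [hρ1]; linarith
  have h12 : ρ1 < s := by rw [hρ1]; linarith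
  have h21 : s < ρ2 := by rw [hρ2]; linarith
  have h22 : ρ2 < r := by rw [hρ2]; linarith
  have S1 := key ρ1 h11 (h12.trans hs2)
  have S2 := key ρ2 (hs1.trans h21) h22
  refine Summable.of_nonneg_of_le (fun j => by positivity) ?_ (S1.add S2)
  intro j
  match j with
  | (n : ℕ) =>
    have : s ^ (n:ℤ) ≤ ρ2 ^ (n:ℤ) := by
      rw [zpow_natCast, zpow_natCast]; exact pow_le_pow_left₀ hs0.le h21.le n
    nlinarith [norm_nonneg (c (n:ℤ)), zpow_pos (hr0.trans h11) (n:ℤ)]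
  | Int.negSucc n =>
    have h1 : s ^ Int.negSucc n ≤ ρ1 ^ Int.negSucc n := by
      rw [zpow_negSucc, zpow_negSucc]
      exact inv_anti₀ (pow_pos (hr0.trans h11) _)
        (pow_le_pow_left₀ (hr0.trans h11).le h12.le _)
    nlinarith [norm_nonneg (c (Int.negSucc n)), zpow_pos (hs0.trans h21 : (0:ℝ) < ρ2) (Int.negSucc n)]

lemma cauchy_aux (r M : ℝ) (hr : 1 < r) (c : ℤ → ℂ) (F : ℂ → ℂ)
    (hsum : ∀ ζ : ℂ, 1 / r < ‖ζ‖ → ‖ζ‖ < r → HasSum (fun k : ℤ => c k * ζ ^ k) (F ζ))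
    (hM : ∀ ζ : ℂ, 1 / r < ‖ζ‖ → ‖ζ‖ < r → ‖F ζ‖ ≤ M)
    (k : ℤ) {s : ℝ} (hs1 : 1 / r < s) (hs2 : s < r) :
    ‖c k‖ * s ^ k ≤ M := by
  have hr0 : (0:ℝ) < 1 / r := by positivity
  have hs0 : 0 < s := hr0.trans hs1
  set π := Real.pi
  have hπ : (0:ℝ) < π := Real.pi_pos
  set g : ℤ → ℝ → ℂ := fun j θ => c j * (s:ℂ) ^ j *
    Complex.exp ((((j:ℂ) - (k:ℂ)) * Complex.I) * θ) with hgdef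
  have hnormζ : ∀ θ : ℝ, ‖(s:ℂ) * Complex.exp (θ * Complex.I)‖ = s := by
    intro θ
    rw [norm_mul, Complex.norm_exp_ofReal_mul_I, Complex.norm_real,
      Real.norm_of_nonneg hs0.le, mul_one]
  have hg : ∀ θ : ℝ, HasSum (fun j => g j θ)
      (F ((s:ℂ) * Complex.exp (θ * Complex.I)) *
        Complex.exp (((-(k:ℂ)) * Complex.I) * θ)) := by
    intro θ
    have h := (hsum ((s:ℂ) * Complex.exp (θ * Complex.I))
      (by rw [hnormζ]; exact hs1) (by rw [hnormζ]; exact hs2)).mul_right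
      (Complex.exp (((-(k:ℂ)) * Complex.I) * θ))
    convert h using 1
    · rfl
    funext j
    have hexp : Complex.exp ((((j:ℂ) - (k:ℂ)) * Complex.I) * θ)
        = Complex.exp ((θ:ℂ) * Complex.I) ^ j * Complex.exp (((-(k:ℂ)) * Complex.I) * θ) := by
      rw [← Complex.exp_int_mul, ← Complex.exp_add]
      congr 1
      ring
    rw [hgdef]
    simp only [mul_zpow, hexp]
    ring
  have hnormg : ∀ j θ, ‖g j θ‖ = ‖c j‖ * s ^ j := by
    intro j θ
    rw [hgdef]
    simp only [norm_mul, norm_zpow, Complex.norm_real, Real.norm_of_nonneg hs0.le]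
    have : ((((j:ℂ) - (k:ℂ)) * Complex.I) * θ) = ((((j:ℝ) - (k:ℝ)) * θ : ℝ) : ℂ) * Complex.I := by
      push_cast; ring
    rw [this, Complex.norm_exp_ofReal_mul_I, mul_one]
  have hsummable := summable_aux r hr c F hsum hs1 hs2
  -- interchange sum and integral
  set μ := volume.restrict (Ioc (0:ℝ) (2*π)) with hμdef
  have hμuniv : μ univ = ENNReal.ofReal (2*π) := by
    rw [hμdef, Measure.restrict_apply MeasurableSet.univ, univ_inter, Real.volume_Ioc, sub_zero]
  have hswap : ∫ θ, (∑' j, g j θ) ∂μ = ∑' j, ∫ θ, g j θ ∂μ := by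
    apply integral_tsum
    · intro j
      exact (Continuous.aestronglyMeasurable (by fun_prop))
    · rw [ne_eq]
      have : ∀ j : ℤ, ∫⁻ θ, ‖g j θ‖ₑ ∂μ = ENNReal.ofReal (‖c j‖ * s ^ j) * ENNReal.ofReal (2*π) := by
        intro j
        have : (fun θ => (‖g j θ‖ₑ : ENNReal)) = fun _ => ENNReal.ofReal (‖c j‖ * s ^ j) := by
          funext θ
          rw [← hnormg j θ, ofReal_norm]
        rw [this, lintegral_const, hμuniv]
      rw [funext this, ENNReal.tsum_mul_right]
      apply ENNReal.mul_ne_top _ ENNReal.ofReal_ne_top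
      rw [← ENNReal.ofReal_tsum_of_nonneg (fun j => by positivity) hsummable]
      exact ENNReal.ofReal_ne_top
  have hint : ∀ j : ℤ, ∫ θ, g j θ ∂μ
      = if j = k then c k * (s:ℂ) ^ k * ((2*π : ℝ) : ℂ) else 0 := by
    intro j
    have hIoc : ∫ θ, g j θ ∂μ = ∫ θ in (0:ℝ)..(2*π), g j θ := by
      rw [hμdef, intervalIntegral.integral_of_le (by positivity)]
    rw [hIoc]
    rcases eq_or_ne j k with rfl | hjk
    · have hfun : (fun θ : ℝ => g j θ) = fun _ => c j * (s:ℂ) ^ j := by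
        funext θ; rw [hgdef]; simp
      rw [hfun, intervalIntegral.integral_const, if_pos rfl, sub_zero, Complex.real_smul]
      ring
    · have hc : (((j:ℂ) - (k:ℂ)) * Complex.I) ≠ 0 := by
        simp only [ne_eq, mul_eq_zero, Complex.I_ne_zero, or_false, sub_eq_zero]
        exact_mod_cast hjk
      have hfun : (fun θ : ℝ => g j θ)
          = fun θ : ℝ => c j * (s:ℂ) ^ j * Complex.exp ((((j:ℂ) - (k:ℂ)) * Complex.I) * θ) := rfl
      rw [hfun, intervalIntegral.integral_const_mul, integral_exp_mul_complex hc]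
      have h1 : Complex.exp ((((j:ℂ) - (k:ℂ)) * Complex.I) * ((2*π : ℝ):ℂ)) = 1 := by
        rw [← Complex.exp_int_mul_two_pi_mul_I (j - k)]
        congr 1; push_cast; ring
      rw [if_neg hjk, h1]
      simp
  have htsum : ∑' j, ∫ θ, g j θ ∂μ = c k * (s:ℂ) ^ k * ((2*π : ℝ) : ℂ) := by
    rw [funext hint, tsum_eq_single k (fun j hj => if_neg hj)]
    simp
  have hbound : ‖∫ θ, (∑' j, g j θ) ∂μ‖ ≤ M * (2*π) := by
    have hb := norm_setIntegral_le_of_norm_le_const (μ := volume) (C := M)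
      (f := fun θ => ∑' j, g j θ)
      (s := Ioc (0:ℝ) (2*π)) (by rw [Real.volume_Ioc]; exact ENNReal.ofReal_lt_top)
      ?_
    · calc ‖∫ θ, (∑' j, g j θ) ∂μ‖ ≤ M * (volume (Ioc (0:ℝ) (2*π))).toReal := hb
      _ ≤ M * (2*π) := by
          rw [Real.volume_Ioc, sub_zero, ENNReal.toReal_ofReal (by positivity)]
    · intro θ _
      show ‖∑' j, g j θ‖ ≤ M
      rw [(hg θ).tsum_eq, norm_mul]
      have : ‖Complex.exp (((-(k:ℂ)) * Complex.I) * θ)‖ = 1 := by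
        have harg : (((-(k:ℂ)) * Complex.I) * θ) = (((-(k:ℝ)) * θ : ℝ) : ℂ) * Complex.I := by
          push_cast; ring
        rw [harg, Complex.norm_exp_ofReal_mul_I]
      rw [this, mul_one]
      exact hM _ (by rw [hnormζ]; exact hs1) (by rw [hnormζ]; exact hs2)
  rw [hswap, htsum] at hbound
  have hnormval : ‖c k * (s:ℂ) ^ k * ((2*π : ℝ) : ℂ)‖ = (‖c k‖ * s ^ k) * (2*π) := by
    rw [norm_mul, norm_mul, norm_zpow, Complex.norm_real, Complex.norm_real,
      Real.norm_of_nonneg hs0.le, Real.norm_of_nonneg (by positivity : (0:ℝ) ≤ 2*π)]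
  rw [hnormval] at hbound
  have h2π : (0:ℝ) < 2*π := by positivity
  exact le_of_mul_le_mul_right hbound h2π

lemma coeff_bound (r M : ℝ) (hr : 1 < r) (c : ℤ → ℂ) (F : ℂ → ℂ)
    (hsum : ∀ ζ : ℂ, 1 / r < ‖ζ‖ → ‖ζ‖ < r → HasSum (fun k : ℤ => c k * ζ ^ k) (F ζ))
    (hM : ∀ ζ : ℂ, 1 / r < ‖ζ‖ → ‖ζ‖ < r → ‖F ζ‖ ≤ M)
    (k : ℕ) : ‖c k‖ * r ^ k ≤ M := by
  have h1 : 1 / r < r := by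
    rw [div_lt_iff₀ (by linarith)]; nlinarith
  have hne : (𝓝[<] r).NeBot := nhdsLT_neBot r
  refine le_of_tendsto (x := 𝓝[<] r) (f := fun s : ℝ => ‖c k‖ * s ^ k) ?_ ?_
  · exact ((continuous_const.mul (continuous_pow k)).tendsto r).mono_left nhdsWithin_le_nhds
  · filter_upwards [Ioo_mem_nhdsLT_of_mem (⟨h1, le_refl r⟩ : r ∈ Ioc (1/r) r)] with s hs
    have := cauchy_aux r M hr c F hsum hM (k : ℤ) hs.1 hs.2
    rwa [zpow_natCast] at this

lemma coeff_bound_neg (r M : ℝ) (hr : 1 < r) (c : ℤ → ℂ) (F : ℂ → ℂ)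
    (hsum : ∀ ζ : ℂ, 1 / r < ‖ζ‖ → ‖ζ‖ < r → HasSum (fun k : ℤ => c k * ζ ^ k) (F ζ))
    (hM : ∀ ζ : ℂ, 1 / r < ‖ζ‖ → ‖ζ‖ < r → ‖F ζ‖ ≤ M)
    (k : ℕ) : ‖c (-(k:ℤ))‖ * r ^ k ≤ M := by
  have hr0 : (0:ℝ) < 1 / r := by positivity
  have h1 : 1 / r < r := by
    rw [div_lt_iff₀ (by linarith)]; nlinarith
  have hne : (𝓝[>] (1/r)).NeBot := nhdsGT_neBot (1/r)
  have hlim : Tendsto (fun s : ℝ => ‖c (-(k:ℤ))‖ * s ^ (-(k:ℤ))) (𝓝[>] (1/r))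
      (𝓝 (‖c (-(k:ℤ))‖ * r ^ k)) := by
    have hc : ContinuousAt (fun s : ℝ => ‖c (-(k:ℤ))‖ * s ^ (-(k:ℤ))) (1/r) :=
      continuousAt_const.mul (continuousAt_zpow₀ _ _ (Or.inl hr0.ne'))
    have : (1/r : ℝ) ^ (-(k:ℤ)) = r ^ k := by
      rw [one_div, zpow_neg, inv_zpow, inv_inv, zpow_natCast]
    rw [← this]
    exact hc.tendsto.mono_left nhdsWithin_le_nhds
  refine le_of_tendsto hlim ?_
  filter_upwards [Ioo_mem_nhdsGT_of_mem (⟨le_refl _, h1⟩ : (1/r : ℝ) ∈ Ico (1/r) r)] with s hs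
  exact cauchy_aux r M hr c F hsum hM (-(k:ℤ)) hs.1 hs.2

lemma diff_aux (M : ℝ) (b : ℕ → ℂ) (hb : ∀ k, ‖b k‖ ≤ M) :
    DifferentiableOn ℂ (fun z : ℂ => ∑' k : ℕ, b k * z ^ k) (ball 0 1) := by
  have hM0 : 0 ≤ M := le_trans (norm_nonneg (b 0)) (hb 0)
  intro z₀ hz₀
  have hz₀' : ‖z₀‖ < 1 := by simpa [mem_ball, dist_eq_norm] using hz₀
  set t := (‖z₀‖ + 1)/2 with htdef
  have ht1 : t < 1 := by rw [htdef]; linarith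
  have htz : ‖z₀‖ < t := by rw [htdef]; linarith
  have ht0 : 0 ≤ t := by rw [htdef]; positivity
  have hD : DifferentiableOn ℂ (fun z : ℂ => ∑' k : ℕ, b k * z ^ k) (ball 0 t) := by
    apply differentiableOn_tsum_of_summable_norm
      (u := fun k : ℕ => M * t ^ k)
      ((summable_geometric_of_lt_one ht0 ht1).mul_left M)
      (fun k => ((differentiable_const (b k)).mul (differentiable_pow k)).differentiableOn)
      isOpen_ball
    intro k w hw
    have hw' : ‖w‖ < t := by simpa [mem_ball, dist_eq_norm] using hw
    calc ‖b k * w ^ k‖ = ‖b k‖ * ‖w‖ ^ k := by rw [norm_mul, norm_pow]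
    _ ≤ M * t ^ k :=
        mul_le_mul (hb k) (pow_le_pow_left₀ (norm_nonneg w) hw'.le k) (by positivity) hM0
  exact (hD.differentiableAt (isOpen_ball.mem_nhds (by
    simpa [mem_ball, dist_eq_norm] using htz))).differentiableWithinAt

lemma half (r M : ℝ) (hr : 1 < r) (c : ℤ → ℂ) (F : ℂ → ℂ)
    (hsum : ∀ ζ : ℂ, 1 / r < ‖ζ‖ → ‖ζ‖ < r → HasSum (fun k : ℤ => c k * ζ ^ k) (F ζ))
    (hM : ∀ ζ : ℂ, 1 / r < ‖ζ‖ → ‖ζ‖ < r → ‖F ζ‖ ≤ M) :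
    DifferentiableOn ℂ
      (fun z : ℂ => ∑' k : ℕ, c (k + 1) * (r : ℂ) ^ (k + 1) * z ^ k) (ball 0 1) ∧
    (∀ z : ℂ, ‖z‖ < 1 →
      ‖(∑' k : ℕ, c (k + 1) * (r : ℂ) ^ (k + 1) * z ^ k) * z + c 0‖
        ≤ r ^ 2 / (r ^ 2 - 1) * M) := by
  have hr0 : (0:ℝ) < r := by linarith
  have h1r : 1 / r < 1 := by rw [div_lt_one hr0]; exact hr
  have h1rr : 1 / r < r := h1r.trans hr
  have hM0 : 0 ≤ M := le_trans (norm_nonneg (F 1)) (hM 1 (by simpa using h1r) (by simpa using hr))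
  have hrnorm : ‖(r:ℂ)‖ = r := by rw [Complex.norm_real, Real.norm_of_nonneg hr0.le]
  have hcb : ∀ k : ℕ, ‖c k * (r:ℂ) ^ k‖ ≤ M := by
    intro k
    rw [norm_mul, norm_pow, hrnorm]
    exact coeff_bound r M hr c F hsum hM k
  have hcb' : ∀ k : ℕ, ‖c (k + 1) * (r:ℂ) ^ (k + 1)‖ ≤ M := by
    intro k
    have := hcb (k + 1)
    rwa [Nat.cast_add, Nat.cast_one] at this
  constructor
  · exact diff_aux M (fun k => c (k + 1) * (r:ℂ) ^ (k + 1)) hcb'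
  intro z hz
  -- the function G
  set a : ℕ → ℂ := fun k => c k * (r:ℂ) ^ k with hadef
  have hasummable : ∀ ξ : ℂ, ‖ξ‖ < 1 → Summable (fun k : ℕ => a k * ξ ^ k) := by
    intro ξ hξ
    apply Summable.of_norm
    refine Summable.of_nonneg_of_le (fun k => norm_nonneg _) (fun k => ?_)
      ((summable_geometric_of_lt_one (norm_nonneg ξ) hξ).mul_left M)
    rw [norm_mul, norm_pow]
    exact mul_le_mul_of_nonneg_right (hcb k) (by positivity)
  set G : ℂ → ℂ := fun ξ => ∑' k : ℕ, a k * ξ ^ k with hGdef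
  have hkey : (∑' k : ℕ, c (k + 1) * (r : ℂ) ^ (k + 1) * z ^ k) * z + c 0 = G z := by
    show _ = ∑' k : ℕ, a k * z ^ k
    rw [(hasummable z hz).tsum_eq_zero_add]
    have h0 : a 0 * z ^ 0 = c 0 := by rw [hadef]; simp
    rw [h0, ← tsum_mul_right]
    have : ∀ k : ℕ, a (k + 1) * z ^ (k + 1) = c (k + 1) * (r:ℂ) ^ (k + 1) * z ^ k * z := by
      intro k
      rw [hadef]
      push_cast
      ring
    rw [funext this]
    ring
  rw [hkey]
  have hGdiff : DifferentiableOn ℂ G (ball 0 1) := diff_aux M a hcb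
  have hr2 : (1:ℝ) < r ^ 2 := by nlinarith
  have hmax : ∀ t : ℝ, ‖z‖ < t → 1 / r ^ 2 < t → t < 1 →
      ‖G z‖ ≤ M + M / (r ^ 2 * t - 1) := by
    intro t hzt hrt ht1
    have ht0 : 0 < t := lt_trans (by positivity) hrt
    have hA : 1 < r ^ 2 * t := by
      have := (div_lt_iff₀ (by positivity : (0:ℝ) < r ^ 2)).mp hrt
      linarith
    have hfront : ∀ ξ ∈ sphere (0:ℂ) t, ‖G ξ‖ ≤ M + M / (r ^ 2 * t - 1) := by
      intro ξ hξ
      have hξn : ‖ξ‖ = t := by simpa [mem_sphere_iff_norm] using hξ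
      set f : ℤ → ℂ := fun j => c j * ((r:ℂ) * ξ) ^ j with hfdef
      have hζn : ‖(r:ℂ) * ξ‖ = r * t := by rw [norm_mul, hrnorm, hξn]
      have h1 : 1 / r < r * t := by rw [div_lt_iff₀ hr0]; nlinarith
      have h2 : r * t < r := by nlinarith
      have hF := hsum ((r:ℂ) * ξ) (by rw [hζn]; exact h1) (by rw [hζn]; exact h2)
      have hpos : HasSum (fun k : ℕ => f (k:ℤ)) (G ξ) := by
        have h := (hasummable ξ (by rw [hξn]; exact ht1)).hasSum
        convert h using 2 with k
        rw [hfdef, hadef]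
        simp only [zpow_natCast, mul_pow]
        ring
      set q : ℝ := (r ^ 2 * t)⁻¹ with hqdef
      have hq0 : 0 ≤ q := by positivity
      have hq1 : q < 1 := by rw [hqdef]; exact inv_lt_one_of_one_lt₀ hA
      have hnegnorm : ∀ k : ℕ, ‖f (-((k:ℤ)+1))‖ ≤ M * q ^ (k+1) := by
        intro k
        rw [hfdef]
        show ‖c (-((k:ℤ)+1)) * ((r:ℂ) * ξ) ^ (-((k:ℤ)+1))‖ ≤ M * q ^ (k+1)
        rw [norm_mul, norm_zpow, hζn]
        have hcneg : ‖c (-((k:ℤ)+1))‖ ≤ M / r ^ (k+1) := by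
          rw [le_div_iff₀ (by positivity : (0:ℝ) < r ^ (k+1))]
          have h := coeff_bound_neg r M hr c F hsum hM (k+1)
          have hcast : (-((k:ℤ)+1)) = -((k+1:ℕ):ℤ) := by omega
          rw [hcast]; exact h
        have hpow : (r * t) ^ (-((k:ℤ)+1)) = ((r * t) ^ (k+1))⁻¹ := by
          have hc2 : (-((k:ℤ)+1)) = -((k+1:ℕ):ℤ) := by omega
          rw [hc2, zpow_neg, zpow_natCast]
        rw [hpow]
        calc ‖c (-((k:ℤ)+1))‖ * ((r * t) ^ (k+1))⁻¹
            ≤ (M / r ^ (k+1)) * ((r * t) ^ (k+1))⁻¹ := by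
              apply mul_le_mul_of_nonneg_right hcneg (by positivity)
        _ = M * q ^ (k+1) := by
              have hrne : r ≠ 0 := hr0.ne'
              have htne : t ≠ 0 := ht0.ne'
              rw [hqdef]
              field_simp
              rw [div_pow, one_pow, mul_pow]
              field_simp
              ring
      have hnegsummable : Summable (fun k : ℕ => f (-((k:ℤ)+1))) := by
        apply Summable.of_norm
        refine Summable.of_nonneg_of_le (fun k => norm_nonneg _) hnegnorm ?_
        exact (((summable_geometric_of_lt_one hq0 hq1).mul_left q).mul_left M).congr
          (fun k => by rw [pow_succ]; ring)
      set S : ℂ := ∑' k : ℕ, f (-((k:ℤ)+1)) with hSdef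
      have hSsum : HasSum (fun k : ℕ => f (-((k:ℤ)+1))) S := hnegsummable.hasSum
      have hgeo : Summable (fun k : ℕ => M * q ^ (k+1)) :=
        (((summable_geometric_of_lt_one hq0 hq1).mul_left q).mul_left M).congr
          (fun k => by rw [pow_succ]; ring)
      have hSbound : ‖S‖ ≤ M / (r ^ 2 * t - 1) := by
        calc ‖S‖ ≤ ∑' k : ℕ, ‖f (-((k:ℤ)+1))‖ := norm_tsum_le_tsum_norm
              (Summable.of_nonneg_of_le (fun k => norm_nonneg _) hnegnorm hgeo)
        _ ≤ ∑' k : ℕ, M * q ^ (k+1) := Summable.tsum_le_tsum hnegnorm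
              (Summable.of_nonneg_of_le (fun k => norm_nonneg _) hnegnorm hgeo) hgeo
        _ = M * (q * (1 - q)⁻¹) := by
            rw [tsum_mul_left]
            congr 1
            have : ∀ k : ℕ, q ^ (k + 1) = q * q ^ k := fun k => by rw [pow_succ]; ring
            rw [funext this, tsum_mul_left, tsum_geometric_of_lt_one hq0 hq1]
        _ = M / (r ^ 2 * t - 1) := by
            rw [hqdef]
            rw [div_eq_mul_inv]
            congr 1
            have hA0 : (r ^ 2 * t) ≠ 0 := by positivity
            have hA1 : (r ^ 2 * t - 1) ≠ 0 := by linarith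
            field_simp
      have htotal : HasSum f (G ξ + S) := hpos.of_nat_of_neg_add_one hSsum
      have hFeq : G ξ + S = F ((r:ℂ) * ξ) := htotal.unique hF
      calc ‖G ξ‖ = ‖F ((r:ℂ) * ξ) - S‖ := by rw [← hFeq]; congr 1; ring
      _ ≤ ‖F ((r:ℂ) * ξ)‖ + ‖S‖ := norm_sub_le _ _
      _ ≤ M + M / (r ^ 2 * t - 1) := add_le_add
            (hM _ (by rw [hζn]; exact h1) (by rw [hζn]; exact h2)) hSbound
    have hdc : DiffContOnCl ℂ G (ball 0 t) := by
      apply DifferentiableOn.diffContOnCl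
      rw [closure_ball (0:ℂ) ht0.ne']
      exact hGdiff.mono (closedBall_subset_ball ht1)
    apply Complex.norm_le_of_forall_mem_frontier_norm_le isBounded_ball hdc
    · intro ξ hξ
      rw [frontier_ball (0:ℂ) ht0.ne'] at hξ
      exact hfront ξ hξ
    · rw [closure_ball (0:ℂ) ht0.ne']
      simpa [mem_closedBall, dist_eq_norm] using hzt.le
  -- take the limit t → 1⁻
  have hlim : Tendsto (fun t : ℝ => M + M / (r ^ 2 * t - 1)) (𝓝[<] (1:ℝ))
      (𝓝 (M + M / (r ^ 2 - 1))) := by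
    have hc : ContinuousAt (fun t : ℝ => M + M / (r ^ 2 * t - 1)) 1 := by
      apply continuousAt_const.add
      apply continuousAt_const.div
      · fun_prop
      · simp only [mul_one]
        intro h; nlinarith [h]
    have : (fun t : ℝ => M + M / (r ^ 2 * t - 1)) 1 = M + M / (r ^ 2 - 1) := by
      simp
    rw [← this]
    exact hc.tendsto.mono_left nhdsWithin_le_nhds
  have hmaxlt : max ‖z‖ (1 / r ^ 2) < 1 := by
    apply max_lt hz
    rw [div_lt_one (by positivity)]; exact hr2
  have hfinal : ‖G z‖ ≤ M + M / (r ^ 2 - 1) := by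
    refine ge_of_tendsto hlim ?_
    filter_upwards [Ioo_mem_nhdsLT_of_mem
      (⟨hmaxlt, le_refl (1:ℝ)⟩ : (1:ℝ) ∈ Ioc (max ‖z‖ (1 / r ^ 2)) 1)] with t ht
    exact hmax t (lt_of_le_of_lt (le_max_left _ _) ht.1)
      (lt_of_le_of_lt (le_max_right _ _) ht.1) ht.2
  calc ‖G z‖ ≤ M + M / (r ^ 2 - 1) := hfinal
  _ = r ^ 2 / (r ^ 2 - 1) * M := by
      have : r ^ 2 - 1 ≠ 0 := by nlinarith
      field_simp
      ring

open Metric in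
/-- Splitting on the conservative hyperbola. Let `r > 1` and let
`F(ζ) = Σ_{k ∈ ℤ} c_k ζ^k` be a Laurent series on the annulus `1/r < |ζ| < r`, bounded
by `M` there (so `M` plays the role of `‖f‖_{H_r}` under `z = ζ/r`, `w = 1/(rζ)`).
Define `f⁺(z) = Σ_{k ≥ 1} c_k r^k z^{k-1}` and `f⁻(w) = Σ_{k ≥ 1} c_{-k} r^k w^{k-1}`.
Then `f⁺`, `f⁻` are holomorphic on the unit disk and
`‖f⁺(z) z + c₀‖_𝔻 ≤ r²/(r²-1) · M` and `‖w f⁻(w) + c₀‖_𝔻 ≤ r²/(r²-1) · M`. -/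
theorem stmt3 (r M : ℝ) (hr : 1 < r) (c : ℤ → ℂ) (F : ℂ → ℂ)
    (hsum : ∀ ζ : ℂ, 1 / r < ‖ζ‖ → ‖ζ‖ < r →
      HasSum (fun k : ℤ => c k * ζ ^ k) (F ζ))
    (hM : ∀ ζ : ℂ, 1 / r < ‖ζ‖ → ‖ζ‖ < r → ‖F ζ‖ ≤ M) :
    DifferentiableOn ℂ
      (fun z : ℂ => ∑' k : ℕ, c (k + 1) * (r : ℂ) ^ (k + 1) * z ^ k) (ball 0 1) ∧
    DifferentiableOn ℂ
      (fun w : ℂ => ∑' k : ℕ, c (-(k + 1 : ℕ)) * (r : ℂ) ^ (k + 1) * w ^ k) (ball 0 1) ∧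
    (∀ z : ℂ, ‖z‖ < 1 →
      ‖(∑' k : ℕ, c (k + 1) * (r : ℂ) ^ (k + 1) * z ^ k) * z + c 0‖
        ≤ r ^ 2 / (r ^ 2 - 1) * M) ∧
    (∀ w : ℂ, ‖w‖ < 1 →
      ‖w * (∑' k : ℕ, c (-(k + 1 : ℕ)) * (r : ℂ) ^ (k + 1) * w ^ k) + c 0‖
        ≤ r ^ 2 / (r ^ 2 - 1) * M) := by
  have hhalf₁ := half r M hr c F hsum hM
  set c' : ℤ → ℂ := fun j => c (-j) with hc'def
  set F' : ℂ → ℂ := fun ζ => F ζ⁻¹ with hF'def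
  have hr0 : (0:ℝ) < r := by linarith
  have hinv : ∀ ζ : ℂ, 1 / r < ‖ζ‖ → ‖ζ‖ < r → 1 / r < ‖ζ⁻¹‖ ∧ ‖ζ⁻¹‖ < r := by
    intro ζ h1 h2
    have hζ0 : (0:ℝ) < ‖ζ‖ := lt_trans (by positivity) h1
    constructor
    · rw [norm_inv, one_div]
      exact inv_strictAnti₀ hζ0 h2
    · rw [norm_inv]
      have := inv_strictAnti₀ (by positivity : (0:ℝ) < 1/r) h1
      rwa [one_div, inv_inv] at this
  have hsum' : ∀ ζ : ℂ, 1 / r < ‖ζ‖ → ‖ζ‖ < r →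
      HasSum (fun k : ℤ => c' k * ζ ^ k) (F' ζ) := by
    intro ζ h1 h2
    obtain ⟨hn1, hn2⟩ := hinv ζ h1 h2
    have h := hsum ζ⁻¹ hn1 hn2
    apply ((Equiv.neg ℤ).hasSum_iff).mp
    convert h using 2 with k
    simp only [Function.comp, Equiv.neg_apply, hc'def, neg_neg]
    rw [zpow_neg, inv_zpow]
  have hM' : ∀ ζ : ℂ, 1 / r < ‖ζ‖ → ‖ζ‖ < r → ‖F' ζ‖ ≤ M := by
    intro ζ h1 h2
    obtain ⟨hn1, hn2⟩ := hinv ζ h1 h2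
    exact hM ζ⁻¹ hn1 hn2
  have hhalf₂ := half r M hr c' F' hsum' hM'
  have heq : (fun w : ℂ => ∑' k : ℕ, c (-(k + 1 : ℕ)) * (r : ℂ) ^ (k + 1) * w ^ k)
      = (fun w : ℂ => ∑' k : ℕ, c' (k + 1) * (r : ℂ) ^ (k + 1) * w ^ k) := by
    funext w
    congr 1
  have he0 : c 0 = c' 0 := by rw [hc'def]; norm_num
  refine ⟨hhalf₁.1, ?_, hhalf₁.2, ?_⟩
  · rw [heq]; exact hhalf₂.1
  · intro w hw
    have h := hhalf₂.2 w hw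
    calc ‖w * (∑' k : ℕ, c (-(k + 1 : ℕ)) * (r : ℂ) ^ (k + 1) * w ^ k) + c 0‖
        = ‖(∑' k : ℕ, c' (k + 1) * (r : ℂ) ^ (k + 1) * w ^ k) * w + c' 0‖ := by
          rw [← he0, mul_comm, congrFun heq w]
    _ ≤ r ^ 2 / (r ^ 2 - 1) * M := h
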